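/- (Lower bound on total forwarding delay) In the chain 1,…,n with good endpoints, suppose the true clocks of nodes 1 and n are affine with relative parameters a_{n,1} > 0 and b_{n,1}, so τ^{n,l} evaluated at the send instant satisfies τ^{n,l} ≥ a_{n,1}·τ^{1,r} + b_{n,1} (packet received no earlier than sent, and node n's clock is affine in node 1's). If the time-stamps satisfy parameter consistency with declared skews â and offsets b̂ and causality, then Σ_{j=2}^{n−1} (τ^{j,r} − τ^{j,l}) ≥ ((a_{n,1} − â_{n,1})/â_{n,i*})·τ^{1,r} + ((b_{n,1} − b̂_{n,1})/â_{n,i*}). -/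

import Mathlib

open Finset

lemma chain_formula9 (n : ℕ) (ahat bhat l r : ℕ → ℝ)
    (hcons : ∀ j ∈ Finset.Icc 2 n, l j = ahat j * r (j - 1) + bhat j) :
    ∀ m, 2 ≤ m → m ≤ n →
      l m = (∏ i ∈ Finset.Icc 2 m, ahat i) * r 1
        + ∑ j ∈ Finset.Icc 2 m, (∏ k ∈ Finset.Icc (j + 1) m, ahat k) * bhat j
        + ∑ j ∈ Finset.Icc 2 (m - 1), (∏ k ∈ Finset.Icc (j + 1) m, ahat k) * (r j - l j) := by
  intro m hm
  induction m, hm using Nat.le_induction with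
  | base =>
    intro h2n
    have h := hcons 2 (by simp [h2n])
    simp at h
    simp [h, Finset.Icc_self, show Finset.Icc 3 2 = (∅ : Finset ℕ) by
      apply Finset.Icc_eq_empty; omega,
      show Finset.Icc 2 1 = (∅ : Finset ℕ) by apply Finset.Icc_eq_empty; omega]
  | succ m hm ih =>
    intro hle
    have hmn : m ≤ n := by omega
    have IH := ih hmn
    have hlm1 : l (m + 1) = ahat (m + 1) * r m + bhat (m + 1) := by
      have := hcons (m + 1) (by simp; omega)
      simpa using this
    simp only [Nat.add_sub_cancel]
    rw [Finset.prod_Icc_succ_top (show 2 ≤ m + 1 by omega),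
        Finset.sum_Icc_succ_top (show 2 ≤ m + 1 by omega)]
    -- split the d-sum over Icc 2 m
    have hsplit : ∀ f : ℕ → ℝ, ∑ j ∈ Finset.Icc 2 m, f j
        = ∑ j ∈ Finset.Icc 2 (m - 1), f j + f m := by
      intro f
      obtain ⟨p, rfl⟩ := Nat.exists_eq_add_of_le hm
      have h1 : 2 + p - 1 = p + 1 := by omega
      have h2 : 2 + p = (p + 1) + 1 := by omega
      rw [h1, h2, Finset.sum_Icc_succ_top (by omega)]
    rw [hsplit fun j => (∏ k ∈ Finset.Icc (j + 1) (m + 1), ahat k) * (r j - l j)]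
    have hb : ∑ j ∈ Finset.Icc 2 m, (∏ k ∈ Finset.Icc (j + 1) (m + 1), ahat k) * bhat j
        = ahat (m + 1) * ∑ j ∈ Finset.Icc 2 m, (∏ k ∈ Finset.Icc (j + 1) m, ahat k) * bhat j := by
      rw [Finset.mul_sum]
      refine Finset.sum_congr rfl fun j hj => ?_
      simp only [Finset.mem_Icc] at hj
      rw [Finset.prod_Icc_succ_top (by omega)]
      ring
    have hd : ∑ j ∈ Finset.Icc 2 (m - 1), (∏ k ∈ Finset.Icc (j + 1) (m + 1), ahat k) * (r j - l j)
        = ahat (m + 1) * ∑ j ∈ Finset.Icc 2 (m - 1), (∏ k ∈ Finset.Icc (j + 1) m, ahat k) * (r j - l j) := by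
      rw [Finset.mul_sum]
      refine Finset.sum_congr rfl fun j hj => ?_
      simp only [Finset.mem_Icc] at hj
      rw [Finset.prod_Icc_succ_top (by omega)]
      ring
    rw [hb, hd, hlm1]
    have e1 : Finset.Icc (m + 1 + 1) (m + 1) = (∅ : Finset ℕ) := by
      apply Finset.Icc_eq_empty; omega
    have e2 : Finset.Icc (m + 1) (m + 1) = {m + 1} := Finset.Icc_self _
    rw [e1, e2]
    simp only [Finset.prod_empty, Finset.prod_singleton, one_mul]
    linear_combination ahat (m + 1) * IH

/-- Lower bound on total forwarding delay: in the chain 1,…,n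
with good endpoints whose true clocks are relatively affine with parameters
a_{n,1} > 0 and b_{n,1}, so that the final receive time satisfies
l n ≥ a_{n,1}·r 1 + b_{n,1}, if the time-stamps satisfy parameter consistency
with declared skews â and offsets b̂ and causality, then
Σ_{j=2}^{n−1} (r j − l j)
  ≥ ((a_{n,1} − â_{n,1})/â_{n,i*})·r 1 + (b_{n,1} − b̂_{n,1})/â_{n,i*}. -/
theorem stmt9 (n : ℕ) (hn : 2 ≤ n) (ahat bhat l r : ℕ → ℝ) (a_n1 b_n1 : ℝ)
    (hahat : ∀ i ∈ Finset.Icc 2 n, 0 < ahat i)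
    (istar : ℕ) (histar : istar ∈ Finset.Icc 2 n)
    (hmin : ∀ k ∈ Finset.Icc 1 n,
      (∏ i ∈ Finset.Icc 2 istar, ahat i) ≤ ∏ i ∈ Finset.Icc 2 k, ahat i)
    (hle1 : (∏ i ∈ Finset.Icc 2 istar, ahat i) ≤ 1)
    (hcons : ∀ j ∈ Finset.Icc 2 n, l j = ahat j * r (j - 1) + bhat j)
    (hcaus : ∀ j, l j ≤ r j)
    (ha : 0 < a_n1)
    (hrecv : a_n1 * r 1 + b_n1 ≤ l n) :
    (∑ j ∈ Finset.Icc 2 (n - 1), (r j - l j))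
      ≥ (a_n1 - ∏ i ∈ Finset.Icc 2 n, ahat i)
          / ((∏ i ∈ Finset.Icc 2 n, ahat i) / (∏ i ∈ Finset.Icc 2 istar, ahat i))
          * r 1
        + (b_n1 - ∑ j ∈ Finset.Icc 2 n, (∏ k ∈ Finset.Icc (j + 1) n, ahat k) * bhat j)
            / ((∏ i ∈ Finset.Icc 2 n, ahat i) / (∏ i ∈ Finset.Icc 2 istar, ahat i)) := by
  simp only [Finset.mem_Icc] at histar
  set A := ∏ i ∈ Finset.Icc 2 n, ahat i with hAdef
  set Ai := ∏ i ∈ Finset.Icc 2 istar, ahat i with hAidef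
  set B := ∑ j ∈ Finset.Icc 2 n, (∏ k ∈ Finset.Icc (j + 1) n, ahat k) * bhat j with hBdef
  have hAi : 0 < Ai := Finset.prod_pos fun i hi => hahat i (by
    simp only [Finset.mem_Icc] at hi ⊢; omega)
  have hA : 0 < A := Finset.prod_pos hahat
  have hC : 0 < A / Ai := div_pos hA hAi
  have hform := chain_formula9 n ahat bhat l r hcons n hn le_rfl
  set S := ∑ j ∈ Finset.Icc 2 (n - 1), (r j - l j) with hSdef
  set T := ∑ j ∈ Finset.Icc 2 (n - 1), (∏ k ∈ Finset.Icc (j + 1) n, ahat k) * (r j - l j) with hTdef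
  have hT : a_n1 * r 1 + b_n1 - A * r 1 - B ≤ T := by
    rw [hform] at hrecv; linarith
  have hTS : T ≤ (A / Ai) * S := by
    rw [hTdef, hSdef, Finset.mul_sum]
    refine Finset.sum_le_sum fun j hj => ?_
    simp only [Finset.mem_Icc] at hj
    have hdnn : (0:ℝ) ≤ r j - l j := sub_nonneg.2 (hcaus j)
    have hAj : 0 < ∏ i ∈ Finset.Icc 2 j, ahat i :=
      Finset.prod_pos fun i hi => hahat i (by simp only [Finset.mem_Icc] at hi ⊢; omega)
    have hsplit : (∏ i ∈ Finset.Icc 2 j, ahat i) * (∏ k ∈ Finset.Icc (j + 1) n, ahat k) = A := by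
      rw [hAdef, show Finset.Icc 2 n = Finset.Ioc 1 n from rfl,
          show Finset.Icc 2 j = Finset.Ioc 1 j from rfl, Finset.Icc_add_one_left_eq_Ioc]
      exact Finset.prod_Ioc_consecutive ahat (by omega) (by omega)
    have hcj : (∏ k ∈ Finset.Icc (j + 1) n, ahat k) ≤ A / Ai := by
      have heq : (∏ k ∈ Finset.Icc (j + 1) n, ahat k) = A / (∏ i ∈ Finset.Icc 2 j, ahat i) := by
        rw [eq_div_iff hAj.ne']; linear_combination hsplit
      rw [heq, div_le_div_iff₀ hAj hAi]
      have := hmin j (by simp only [Finset.mem_Icc]; omega)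
      nlinarith
    exact mul_le_mul_of_nonneg_right hcj hdnn
  rw [ge_iff_le, div_mul_eq_mul_div, ← add_div, div_le_iff₀ hC]
  nlinarith [hT, hTS]
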